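/- Inductive property of windows: let w : ℕ → ℝ, λ ∈ ℝ, and i < j be positions such that the λ-window starting at i closes at j, i.e., S(i,j) ≥ λ·(j−i) while S(i,k) < λ·(k−i) for every k with i < k < j. Then for every k with i < k < j one has S(k,j) ≥ λ·(j−k); consequently, for each such k the λ-window starting at k closes at some position ≤ j. -/

import Mathlib

open scoped Classical

/-- `infixSum w i j = S(i,j) = Σ_{t=i}^{j-1} w t`, the total payoff of the
infix `(i, j)` of the payoff sequence `w`. -/
def infixSum (w : ℕ → ℝ) (i j : ℕ) : ℝ :=
  ∑ t ∈ Finset.Ico i j, w t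

/-- Inductive property of windows: if the `λ`-window starting at `i` closes at
`j`, then for every `k` with `i < k < j` we have `S(k,j) ≥ λ·(j−k)`, and
consequently the `λ`-window starting at `k` closes at some position `≤ j`. -/
theorem inductive_property_of_windows (w : ℕ → ℝ) (lam : ℝ) (i j : ℕ) (hij : i < j)
    (hclose : lam * ((j - i : ℕ) : ℝ) ≤ infixSum w i j)
    (hopen : ∀ k : ℕ, i < k → k < j → infixSum w i k < lam * ((k - i : ℕ) : ℝ)) :
    ∀ k : ℕ, i < k → k < j →
      lam * ((j - k : ℕ) : ℝ) ≤ infixSum w k j ∧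
      ∃ j' : ℕ, k < j' ∧ j' ≤ j ∧ lam * ((j' - k : ℕ) : ℝ) ≤ infixSum w k j' := by
  intro k hik hkj
  have hsplit : infixSum w i k + infixSum w k j = infixSum w i j := by
    unfold infixSum
    exact Finset.sum_Ico_consecutive _ hik.le hkj.le
  have hnat : (j - i : ℕ) = (k - i) + (j - k) := by omega
  have hcast : ((j - i : ℕ) : ℝ) = ((k - i : ℕ) : ℝ) + ((j - k : ℕ) : ℝ) := by
    rw [hnat]; push_cast; ring
  have h1 := hopen k hik hkj
  have hmain : lam * ((j - k : ℕ) : ℝ) ≤ infixSum w k j := by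
    have := hclose
    rw [hcast, mul_add] at this
    linarith [hsplit]
  exact ⟨hmain, j, hkj, le_rfl, hmain⟩
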